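/- Let T > 0, let a > b ≥ 0 be real numbers, and let γ ≥ 1 satisfy γ > (a−1)/(a−b). Then there exists a constant C > 0, depending only on T, γ, a, b, such that for all integers n ≥ 2 and r ≥ 1 with r ≤ n/2, the modified Kusuoka partition (t_j) of [0,T] with parameters γ, r and n+1 points satisfies ∑_{j=r}^{n−2} (t_{j+1} − t_j)^a (T − t_{j+1})^{−b} ≤ C (1 − r/n)^{−b} (n − r)^{−(a−1)}. -/

import Mathlib

/-- MVT-type bound: `u^γ - v^γ ≤ γ u^(γ-1) (u - v)` for `γ ≥ 1`, `0 ≤ v ≤ u`. -/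
lemma kusuoka_aux_diff {γ u v : ℝ} (hγ : 1 ≤ γ) (hv : 0 ≤ v) (huv : v ≤ u) (hu : 0 < u) :
    u ^ γ - v ^ γ ≤ γ * u ^ (γ - 1) * (u - v) := by
  have hvu0 : 0 ≤ v / u := div_nonneg hv hu.le
  have hb := one_add_mul_self_le_rpow_one_add (s := v / u - 1) (by linarith) hγ
  rw [add_sub_cancel] at hb
  have hvq : v ^ γ = u ^ γ * (v / u) ^ γ := by
    rw [← Real.mul_rpow hu.le hvu0, mul_div_cancel₀ _ hu.ne']
  have huγ : u ^ γ = u ^ (γ - 1) * u := by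
    rw [← Real.rpow_add_one hu.ne', sub_add_cancel]
  have huγ0 : 0 ≤ u ^ (γ - 1) := Real.rpow_nonneg hu.le _
  have h2 : u ^ γ - v ^ γ ≤ u ^ γ * (γ * (1 - v / u)) := by
    have h0 : 0 ≤ u ^ γ := Real.rpow_nonneg hu.le γ
    nlinarith [hb]
  have h3 : u ^ γ * (γ * (1 - v / u)) = γ * u ^ (γ - 1) * (u - v) := by
    rw [huγ]; field_simp
  linarith [h3 ▸ h2]

/-- Concavity-type bound: `c x^(c-1) ≤ x^c - (x-1)^c` for `0 < c ≤ 1`, `x ≥ 1`. -/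
lemma kusuoka_aux_diff2 {c x : ℝ} (hc0 : 0 < c) (hc1 : c ≤ 1) (hx : 1 ≤ x) :
    c * x ^ (c - 1) ≤ x ^ c - (x - 1) ^ c := by
  have hx0 : 0 < x := by linarith
  have hq0 : 0 ≤ (x - 1) / x := div_nonneg (by linarith) hx0.le
  have hb := rpow_one_add_le_one_add_mul_self (s := (x - 1) / x - 1) (by linarith) hc0.le hc1
  rw [add_sub_cancel] at hb
  have hvq : (x - 1) ^ c = x ^ c * ((x - 1) / x) ^ c := by
    rw [← Real.mul_rpow hx0.le hq0, mul_div_cancel₀ _ hx0.ne']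
  have hxc : x ^ c = x ^ (c - 1) * x := by
    rw [← Real.rpow_add_one hx0.ne', sub_add_cancel]
  have h0 : 0 ≤ x ^ (c - 1) := Real.rpow_nonneg hx0.le _
  have key : (x - 1) ^ c ≤ x ^ c - c * x ^ (c - 1) := by
    rw [hvq]
    have h1 : 1 + c * ((x - 1) / x - 1) = 1 - c / x := by field_simp; ring
    rw [h1] at hb
    have h2 : x ^ c * ((x - 1) / x) ^ c ≤ x ^ c * (1 - c / x) := by
      have : 0 ≤ x ^ c := Real.rpow_nonneg hx0.le _
      exact mul_le_mul_of_nonneg_left hb this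
    refine h2.trans_eq ?_
    rw [hxc]; field_simp
  linarith

/-- Sum bound: `∑_{k=1}^{m-1} (k/m)^e ≤ (1 + 1/(e+1)) m` for `e > -1`. -/
lemma kusuoka_sum_pow {e : ℝ} (he : -1 < e) (m : ℕ) :
    ∑ k ∈ Finset.Ico 1 m, ((k : ℝ) / m) ^ e ≤ (1 + 1 / (e + 1)) * m := by
  rcases Nat.eq_zero_or_pos m with rfl | hm
  · simp
  have hm0 : (0:ℝ) < m := by exact_mod_cast hm
  have hc : 0 < e + 1 := by linarith
  have hK1 : (1:ℝ) ≤ 1 + 1 / (e + 1) := by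
    have : 0 ≤ 1 / (e + 1) := by positivity
    linarith
  rcases le_or_gt 0 e with he0 | he0
  · have hle : ∀ k ∈ Finset.Ico 1 m, ((k:ℝ)/m)^e ≤ 1 := by
      intro k hk
      obtain ⟨hk1, hk2⟩ := Finset.mem_Ico.mp hk
      apply Real.rpow_le_one (by positivity) _ he0
      rw [div_le_one hm0]; exact_mod_cast hk2.le
    calc ∑ k ∈ Finset.Ico 1 m, ((k:ℝ)/m)^e ≤ ∑ _k ∈ Finset.Ico 1 m, (1:ℝ) :=
          Finset.sum_le_sum hle
      _ = ((m - 1 : ℕ) : ℝ) := by simp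
      _ ≤ (1 + 1/(e+1)) * m := by
          have h1 : ((m-1:ℕ):ℝ) ≤ (m:ℝ) := by exact_mod_cast Nat.sub_le m 1
          nlinarith
  · set c := e + 1 with hcdef
    have hc1 : c ≤ 1 := by rw [hcdef]; linarith
    have step : ∀ k ∈ Finset.Ico 1 m,
        ((k:ℝ)/m)^e ≤ (m:ℝ)^(-e)/c * ((k:ℝ)^c - ((k:ℝ)-1)^c) := by
      intro k hk
      obtain ⟨hk1, _⟩ := Finset.mem_Ico.mp hk
      have hk1' : (1:ℝ) ≤ k := by exact_mod_cast hk1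
      have hd := kusuoka_aux_diff2 (c := c) hc hc1 hk1'
      have hce : c - 1 = e := by rw [hcdef]; ring
      rw [hce] at hd
      have hdiv : ((k:ℝ)/m)^e = (k:ℝ)^e * (m:ℝ)^(-e) := by
        rw [Real.div_rpow (by positivity) hm0.le, Real.rpow_neg hm0.le, div_eq_mul_inv]
      rw [hdiv]
      have hke : (k:ℝ)^e ≤ ((k:ℝ)^c - ((k:ℝ)-1)^c)/c := by
        rw [le_div_iff₀ hc]; nlinarith
      have hm' : 0 ≤ (m:ℝ)^(-e) := Real.rpow_nonneg hm0.le _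
      calc (k:ℝ)^e * (m:ℝ)^(-e) ≤ (((k:ℝ)^c - ((k:ℝ)-1)^c)/c) * (m:ℝ)^(-e) :=
            mul_le_mul_of_nonneg_right hke hm'
        _ = (m:ℝ)^(-e)/c * ((k:ℝ)^c - ((k:ℝ)-1)^c) := by ring
    have tele : ∑ k ∈ Finset.Ico 1 m, ((k:ℝ)^c - ((k:ℝ)-1)^c) = ((m-1:ℕ):ℝ)^c := by
      rw [Finset.sum_Ico_eq_sum_range]
      have hcongr : ∀ i ∈ Finset.range (m - 1),
          (((1 + i : ℕ):ℝ)^c - (((1 + i : ℕ):ℝ)-1)^c)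
            = ((i+1:ℕ):ℝ)^c - ((i:ℕ):ℝ)^c := by
        intro i _
        push_cast
        ring_nf
      rw [Finset.sum_congr rfl hcongr, Finset.sum_range_sub (fun i => ((i:ℕ):ℝ)^c) (m-1)]
      simp [Real.zero_rpow hc.ne']
    calc ∑ k ∈ Finset.Ico 1 m, ((k:ℝ)/m)^e
        ≤ ∑ k ∈ Finset.Ico 1 m, (m:ℝ)^(-e)/c * ((k:ℝ)^c - ((k:ℝ)-1)^c) :=
          Finset.sum_le_sum step
      _ = (m:ℝ)^(-e)/c * ((m-1:ℕ):ℝ)^c := by rw [← Finset.mul_sum, tele]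
      _ ≤ (m:ℝ)^(-e)/c * (m:ℝ)^c := by
          have h1 : ((m-1:ℕ):ℝ) ≤ (m:ℝ) := by exact_mod_cast Nat.sub_le m 1
          have h2 : (0:ℝ) ≤ ((m-1:ℕ):ℝ) := by positivity
          have := Real.rpow_le_rpow h2 h1 hc.le
          have h3 : 0 ≤ (m:ℝ)^(-e)/c := by positivity
          exact mul_le_mul_of_nonneg_left this h3
      _ = (m:ℝ)/c := by
          rw [div_mul_eq_mul_div, ← Real.rpow_add hm0]
          norm_num [hcdef]
      _ ≤ (1 + 1/(e+1)) * m := by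
          rw [div_eq_mul_inv, hcdef]
          have : (0:ℝ) ≤ m := hm0.le
          have h4 : (e+1)⁻¹ = 1/(e+1) := by ring
          nlinarith [hm0.le]

/-- Per-term bound for the Kusuoka sum. -/
lemma kusuoka_term {T a b γ S u v : ℝ} (hb : 0 ≤ b) (hab : b < a)
    (hγ1 : 1 ≤ γ) (hS0 : 0 < S) (hST : S ≤ T) (hv : 0 < v) (huv : v ≤ u) (hu2 : u ≤ 2*v) :
    (S * (u ^ γ - v ^ γ)) ^ a * (S * v ^ γ) ^ (-b)
      ≤ T ^ (a-b) * γ ^ a * 2 ^ ((γ-1)*a) * (u - v) ^ a * v ^ (γ*(a-b) - a) := by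
  have hu : 0 < u := lt_of_lt_of_le hv huv
  have ha : 0 < a := lt_of_le_of_lt hb hab
  have hγ0 : 0 < γ := by linarith
  have huv0 : 0 ≤ u - v := by linarith
  have h1 := kusuoka_aux_diff hγ1 hv.le huv hu
  have hdnn : 0 ≤ u^γ - v^γ := sub_nonneg.2 (Real.rpow_le_rpow hv.le huv hγ0.le)
  have hmid0 : 0 ≤ γ * u^(γ-1) * (u-v) :=
    mul_nonneg (mul_nonneg hγ0.le (Real.rpow_nonneg hu.le _)) huv0
  have hf1 : (S*(u^γ - v^γ))^a ≤ (S*(γ * u^(γ-1) * (u-v)))^a :=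
    Real.rpow_le_rpow (mul_nonneg hS0.le hdnn)
      (mul_le_mul_of_nonneg_left h1 hS0.le) ha.le
  have e1 : (S*(γ * u^(γ-1) * (u-v)))^a = S^a * γ^a * (u^(γ-1))^a * (u-v)^a := by
    rw [Real.mul_rpow hS0.le hmid0,
        Real.mul_rpow (mul_nonneg hγ0.le (Real.rpow_nonneg hu.le _)) huv0,
        Real.mul_rpow hγ0.le (Real.rpow_nonneg hu.le _)]
    ring
  have e2 : (u^(γ-1))^a = u^((γ-1)*a) := (Real.rpow_mul hu.le (γ-1) a).symm
  have hexp : 0 ≤ (γ-1)*a := mul_nonneg (by linarith) ha.le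
  have e3 : u^((γ-1)*a) ≤ 2^((γ-1)*a) * v^((γ-1)*a) := by
    calc u^((γ-1)*a) ≤ (2*v)^((γ-1)*a) := Real.rpow_le_rpow hu.le hu2 hexp
      _ = 2^((γ-1)*a) * v^((γ-1)*a) := Real.mul_rpow (by norm_num) hv.le
  have e4 : (S*v^γ)^(-b) = S^(-b) * v^(γ*(-b)) := by
    rw [Real.mul_rpow hS0.le (Real.rpow_nonneg hv.le _), ← Real.rpow_mul hv.le]
  have hBpos : 0 ≤ S^(-b) * v^(γ*(-b)) :=
    mul_nonneg (Real.rpow_nonneg hS0.le _) (Real.rpow_nonneg hv.le _)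
  have hA := hf1.trans_eq e1
  have e5 : S^a * S^(-b) = S^(a-b) := by rw [← Real.rpow_add hS0, ← sub_eq_add_neg]
  have e6 : v^((γ-1)*a) * v^(γ*(-b)) = v^(γ*(a-b)-a) := by
    rw [← Real.rpow_add hv]; congr 1; ring
  have hSS : 0 ≤ S^a * S^(-b) :=
    mul_nonneg (Real.rpow_nonneg hS0.le _) (Real.rpow_nonneg hS0.le _)
  have hγa : 0 ≤ γ^a := Real.rpow_nonneg hγ0.le _
  have huva : 0 ≤ (u-v)^a := Real.rpow_nonneg huv0 _
  calc (S*(u^γ - v^γ))^a * (S*v^γ)^(-b)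
      ≤ (S^a*γ^a*(u^(γ-1))^a*(u-v)^a) * (S^(-b) * v^(γ*(-b))) := by
        rw [e4]; exact mul_le_mul_of_nonneg_right hA hBpos
    _ = (S^a * S^(-b)) * γ^a * (u-v)^a * (u^((γ-1)*a) * v^(γ*(-b))) := by rw [e2]; ring
    _ ≤ (S^a * S^(-b)) * γ^a * (u-v)^a * ((2^((γ-1)*a)*v^((γ-1)*a)) * v^(γ*(-b))) := by
        refine mul_le_mul_of_nonneg_left
          (mul_le_mul_of_nonneg_right e3 (Real.rpow_nonneg hv.le _)) ?_
        exact mul_nonneg (mul_nonneg hSS hγa) huva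
    _ = (S^(a-b)) * (γ^a * (u-v)^a * (2^((γ-1)*a) * v^(γ*(a-b)-a))) := by
        rw [e5, mul_assoc ((2:ℝ)^((γ-1)*a)), e6]; ring
    _ ≤ (T^(a-b)) * (γ^a * (u-v)^a * (2^((γ-1)*a) * v^(γ*(a-b)-a))) := by
        refine mul_le_mul_of_nonneg_right
          (Real.rpow_le_rpow hS0.le hST (by linarith)) ?_
        have h2a : (0:ℝ) ≤ 2^((γ-1)*a) := Real.rpow_nonneg (by norm_num) _
        have hva : 0 ≤ v^(γ*(a-b)-a) := Real.rpow_nonneg hv.le _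
        exact mul_nonneg (mul_nonneg hγa huva) (mul_nonneg h2a hva)
    _ = T^(a-b) * γ^a * 2^((γ-1)*a) * (u-v)^a * v^(γ*(a-b)-a) := by ring


set_option maxHeartbeats 1000000

/-- For `T > 0`, reals `a > b ≥ 0` and `γ ≥ 1` with `γ > (a-1)/(a-b)`, there is a
constant `C > 0` (depending only on `T, γ, a, b`) such that for all `n ≥ 2`, `r ≥ 1` with
`r ≤ n/2`, the modified Kusuoka partition — `t 0 = 0`; `t (k+1) = t k + T * n^(-r/(k+1))` for
`k < r`; `t j = (T - t r) * (1 - (1 - (j-r)/(n-r))^γ) + t r` for `r < j ≤ n-1`; `t n = T` —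
satisfies `∑_{j=r}^{n-2} (t (j+1) - t j)^a * (T - t (j+1))^(-b)
  ≤ C * (1 - r/n)^(-b) * (n - r)^(-(a-1))`. -/
theorem stmt_6 (T a b γ : ℝ) (hT : 0 < T) (hb : 0 ≤ b) (hab : b < a)
    (hγ1 : 1 ≤ γ) (hγ : (a - 1) / (a - b) < γ) :
    ∃ C > 0, ∀ n r : ℕ, 2 ≤ n → 1 ≤ r → 2 * r ≤ n →
      ∀ t : ℕ → ℝ,
        t 0 = 0 →
        (∀ k, k < r → t (k + 1) = t k + T * (n : ℝ) ^ (-((r : ℝ) / ((k : ℝ) + 1)))) →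
        (∀ j, r < j → j ≤ n - 1 →
          t j = (T - t r) * (1 - (1 - ((j : ℝ) - r) / ((n : ℝ) - r)) ^ γ) + t r) →
        t n = T →
        ∑ j ∈ Finset.Ico r (n - 1), (t (j + 1) - t j) ^ a * (T - t (j + 1)) ^ (-b)
          ≤ C * (1 - (r : ℝ) / n) ^ (-b) * ((n : ℝ) - r) ^ (-(a - 1)) := by
  have hab' : 0 < a - b := by linarith
  have ha : 0 < a := lt_of_le_of_lt hb hab
  have hγ0 : 0 < γ := by linarith
  set e := γ*(a-b) - a with hedef
  have he : -1 < e := by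
    have := (div_lt_iff₀ hab').mp hγ
    rw [hedef]; nlinarith
  have hc : 0 < e + 1 := by linarith
  set K := 1 + 1/(e+1) with hKdef
  have hK0 : 0 < K := by rw [hKdef]; positivity
  set D := T^(a-b) * γ^a * 2^((γ-1)*a) with hDdef
  have hD0 : 0 < D := by
    rw [hDdef]
    exact mul_pos (mul_pos (Real.rpow_pos_of_pos hT _) (Real.rpow_pos_of_pos hγ0 _))
      (Real.rpow_pos_of_pos two_pos _)
  refine ⟨D * K, mul_pos hD0 hK0, ?_⟩
  intro n r hn hr hrn t ht0 hrec hmid htn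
  have hrn' : r < n := by omega
  have hN0 : (0:ℝ) < n := by positivity
  have hN1 : (1:ℝ) ≤ n := by exact_mod_cast (by omega : 1 ≤ n)
  have hrN : (r:ℝ) < n := by exact_mod_cast hrn'
  have hmd0 : (0:ℝ) < (n:ℝ) - r := by linarith
  -- bounds on t r
  have hkey : ∀ k, k ≤ r → 0 ≤ t k ∧ t k ≤ T * k / n := by
    intro k
    induction k with
    | zero => intro _; simp [ht0]
    | succ k ih =>
      intro hk
      have hk' : k < r := by omega
      obtain ⟨h0, h1⟩ := ih (by omega)
      rw [hrec k hk']
      have hpow : (0:ℝ) < (n:ℝ)^(-((r:ℝ)/((k:ℝ)+1))) := Real.rpow_pos_of_pos hN0 _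
      constructor
      · nlinarith [mul_pos hT hpow]
      · have h2 : (n:ℝ)^(-((r:ℝ)/((k:ℝ)+1))) ≤ (n:ℝ)^(-(1:ℝ)) := by
          apply Real.rpow_le_rpow_of_exponent_le hN1
          have hk1 : (0:ℝ) < (k:ℝ)+1 := by positivity
          have hcast : (k:ℝ)+1 ≤ r := by exact_mod_cast (by omega : k+1 ≤ r)
          have := (one_le_div hk1).mpr hcast
          linarith
        have h3 : (n:ℝ)^(-(1:ℝ)) = 1/n := by
          rw [Real.rpow_neg hN0.le, Real.rpow_one, one_div]
        rw [h3] at h2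
        have h4 : T * (n:ℝ)^(-((r:ℝ)/((k:ℝ)+1))) ≤ T * (1/n) :=
          mul_le_mul_of_nonneg_left h2 hT.le
        have h5 : T * ((k:ℝ)+1)/n = T*k/n + T*(1/n) := by field_simp
        push_cast
        linarith
  obtain ⟨htr0, htr1⟩ := hkey r le_rfl
  have htrT2 : t r ≤ T/2 := by
    have h2r : (2:ℝ)*r ≤ n := by exact_mod_cast hrn
    have h6 : T*(r:ℝ)/n ≤ T/2 := by
      rw [div_le_div_iff₀ hN0 (by norm_num : (0:ℝ) < 2)]
      nlinarith
    linarith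
  set S := T - t r with hSdef
  have hS0 : 0 < S := by rw [hSdef]; linarith
  have hST : S ≤ T := by rw [hSdef]; linarith
  -- closed formula on the tail
  have hform : ∀ j, r ≤ j → j ≤ n - 1 →
      t j = S * (1 - (((n:ℝ) - j)/((n:ℝ)-r)) ^ γ) + t r := by
    intro j h1 h2
    rcases eq_or_lt_of_le h1 with rfl | h1'
    · rw [div_self hmd0.ne', Real.one_rpow]; ring
    · rw [hmid j h1' h2, hSdef]
      congr 3
      field_simp
      congr 1; ring
  -- per-term bound
  have hterm : ∀ j ∈ Finset.Ico r (n-1),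
      (t (j+1) - t j)^a * (T - t (j+1))^(-b)
        ≤ D * (1/((n:ℝ)-r))^a * (((n:ℝ) - j - 1)/((n:ℝ)-r))^e := by
    intro j hj
    obtain ⟨hj1, hj2⟩ := Finset.mem_Ico.mp hj
    have hj2' : j + 2 ≤ n := by omega
    have hjN : (j:ℝ) + 2 ≤ n := by exact_mod_cast hj2'
    set u := ((n:ℝ) - j)/((n:ℝ)-r) with hu
    set v := ((n:ℝ) - j - 1)/((n:ℝ)-r) with hv
    have hv0 : 0 < v := by rw [hv]; apply div_pos; linarith; exact hmd0
    have hvu : v ≤ u := by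
      rw [hv, hu]
      apply div_le_div_of_nonneg_right ?_ ?_ <;> linarith
    have hu2 : u ≤ 2*v := by
      rw [hu, hv, ← mul_div_assoc]
      apply div_le_div_of_nonneg_right ?_ ?_ <;> linarith
    have ht1 : t j = S * (1 - u^γ) + t r := hform j hj1 (by omega)
    have ht2 : t (j+1) = S * (1 - v^γ) + t r := by
      have h7 := hform (j+1) (by omega) (by omega)
      rw [h7, hv]
      congr 4
      push_cast
      ring
    have hd1 : t (j+1) - t j = S * (u^γ - v^γ) := by rw [ht1, ht2]; ring
    have hd2 : T - t (j+1) = S * v^γ := by rw [ht2, hSdef]; ring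
    rw [hd1, hd2]
    have hres := kusuoka_term (T := T) hb hab hγ1 hS0 hST hv0 hvu hu2
    have huv1 : u - v = 1/((n:ℝ)-r) := by
      rw [hu, hv, div_sub_div_same]
      congr 1
      ring
    rw [huv1, ← hDdef, ← hedef] at hres
    exact hres
  have hcastm : ((n-r:ℕ):ℝ) = (n:ℝ) - r := by
    push_cast [Nat.cast_sub hrn'.le]
    ring
  -- reindexing the sum
  have hre : ∑ j ∈ Finset.Ico r (n-1), (((n:ℝ) - j - 1)/((n:ℝ)-r))^e
      = ∑ k ∈ Finset.Ico 1 (n-r), ((k:ℝ)/((n-r:ℕ):ℝ))^e := by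
    rw [hcastm]
    refine Finset.sum_nbij' (fun j => n-1-j) (fun k => n-1-k) ?_ ?_ ?_ ?_ ?_
    · intro j hj; simp only [Finset.mem_Ico] at *; omega
    · intro k hk; simp only [Finset.mem_Ico] at *; omega
    · intro j hj; simp only [Finset.mem_Ico] at hj; show n-1-(n-1-j) = j; omega
    · intro k hk; simp only [Finset.mem_Ico] at hk; show n-1-(n-1-k) = k; omega
    · intro j hj
      simp only [Finset.mem_Ico] at hj
      have hcast2 : ((n-1-j:ℕ):ℝ) = (n:ℝ) - j - 1 := by
        push_cast [Nat.cast_sub (by omega : j ≤ n - 1), Nat.cast_sub (by omega : 1 ≤ n)]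
        ring
      rw [hcast2]
  have hsum2 := kusuoka_sum_pow he (n - r)
  -- putting things together
  have hstep : ∑ j ∈ Finset.Ico r (n-1), (t (j+1) - t j)^a * (T - t (j+1))^(-b)
      ≤ D * (1/((n:ℝ)-r))^a * (K * ((n:ℝ)-r)) := by
    calc ∑ j ∈ Finset.Ico r (n-1), (t (j+1) - t j)^a * (T - t (j+1))^(-b)
        ≤ ∑ j ∈ Finset.Ico r (n-1),
            D * (1/((n:ℝ)-r))^a * (((n:ℝ) - j - 1)/((n:ℝ)-r))^e :=
          Finset.sum_le_sum hterm
      _ = D * (1/((n:ℝ)-r))^a * ∑ j ∈ Finset.Ico r (n-1),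
            (((n:ℝ) - j - 1)/((n:ℝ)-r))^e := by rw [Finset.mul_sum]
      _ ≤ D * (1/((n:ℝ)-r))^a * (K * ((n:ℝ)-r)) := by
          apply mul_le_mul_of_nonneg_left ?_ ?_
          · rw [hre]
            calc ∑ k ∈ Finset.Ico 1 (n-r), ((k:ℝ)/((n-r:ℕ):ℝ))^e
                ≤ K * ((n-r:ℕ):ℝ) := hsum2
              _ = K * ((n:ℝ)-r) := by rw [hcastm]
          · have := Real.rpow_nonneg (le_of_lt (by positivity : (0:ℝ) < 1/((n:ℝ)-r))) a
            positivity
    -- end calc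
  have hpowid : (1/((n:ℝ)-r))^a * ((n:ℝ)-r) = ((n:ℝ)-r)^(-(a-1)) := by
    rw [one_div, Real.inv_rpow hmd0.le, ← Real.rpow_neg hmd0.le]
    nth_rewrite 2 [← Real.rpow_one ((n:ℝ)-r)]
    rw [← Real.rpow_add hmd0]
    congr 1
    ring
  have hfin : D * (1/((n:ℝ)-r))^a * (K * ((n:ℝ)-r)) = D * K * ((n:ℝ)-r)^(-(a-1)) := by
    rw [← hpowid]; ring
  rw [hfin] at hstep
  -- compare with the RHS
  have hx0 : 0 < 1 - (r:ℝ)/n := by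
    have : (r:ℝ)/n < 1 := (div_lt_one hN0).mpr hrN
    linarith
  have hx1 : 1 - (r:ℝ)/n ≤ 1 := by
    have : 0 ≤ (r:ℝ)/n := by positivity
    linarith
  have h9 : 1 ≤ (1 - (r:ℝ)/n)^(-b) :=
    Real.one_le_rpow_of_pos_of_le_one_of_nonpos hx0 hx1 (neg_nonpos.mpr hb)
  have h10 : 0 ≤ ((n:ℝ)-r)^(-(a-1)) := Real.rpow_nonneg hmd0.le _
  have h11 : 0 ≤ D * K := (mul_pos hD0 hK0).le
  calc ∑ j ∈ Finset.Ico r (n-1), (t (j+1) - t j)^a * (T - t (j+1))^(-b)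
      ≤ D * K * ((n:ℝ)-r)^(-(a-1)) := hstep
    _ ≤ D * K * (1 - (r:ℝ)/n)^(-b) * ((n:ℝ)-r)^(-(a-1)) := by
        nlinarith [mul_nonneg (mul_nonneg h11 (sub_nonneg.mpr h9)) h10]
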